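/- Let (G,Γ₁,Γ₂) be a boundary triple for S, and let A, B be bounded linear operators on G with A B* = B A* and M^{A,B} boundedly invertible (a normalized pair), where M^{A,B}(x₁,x₂) = (A x₁ − B x₂, B x₁ + A x₂) on G ⊕ G. Then for every z in the resolvent set of H⁰: z belongs to the spectrum of H^{A,B} if and only if 0 belongs to the spectrum of B Q(z) − A, if and only if 0 belongs to the spectrum of Q(z) B* − A*. -/

import Mathlib

open ContinuousLinearMap

variable {H : Type*} [NormedAddCommGroup H] [InnerProductSpace ℂ H] [CompleteSpace H]
variable {G : Type*} [NormedAddCommGroup G] [InnerProductSpace ℂ G] [CompleteSpace G]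

/-- The operator `M^{A,B}` on `G × G`, `(x₁,x₂) ↦ (A x₁ - B x₂, B x₁ + A x₂)`. -/
noncomputable def MAB (A B : G →L[ℂ] G) : (G × G) →L[ℂ] (G × G) :=
  ((A.comp (fst ℂ G G)) - (B.comp (snd ℂ G G))).prod
    ((B.comp (fst ℂ G G)) + (A.comp (snd ℂ G G)))

/-- A bounded operator is boundedly invertible if it has a bounded two-sided inverse. -/
def IsBoundedlyInvertible {E F : Type*} [NormedAddCommGroup E] [NormedSpace ℂ E]
    [NormedAddCommGroup F] [NormedSpace ℂ F] (T : E →L[ℂ] F) : Prop :=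
  ∃ T' : F →L[ℂ] E, (∀ x, T' (T x) = x) ∧ (∀ y, T (T' y) = y)

/-- A densely defined operator is symmetric if `⟪Sφ, ψ⟫ = ⟪φ, Sψ⟫` on its domain. -/
def IsSymmetricPMap (S : H →ₗ.[ℂ] H) : Prop :=
  ∀ φ ψ : S.domain, (inner ℂ (S φ) (ψ : H) : ℂ) = inner ℂ (φ : H) (S ψ)

/-- A boundary triple `(G, Γ₁, Γ₂)` for a symmetric operator `S`: two boundary maps
on `dom S*` satisfying the abstract Green identity and joint surjectivity. -/
structure BoundaryTriple (S : H →ₗ.[ℂ] H) (G : Type*) [NormedAddCommGroup G]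
    [InnerProductSpace ℂ G] [CompleteSpace G] where
  Γ₁ : S.adjoint.domain →ₗ[ℂ] G
  Γ₂ : S.adjoint.domain →ₗ[ℂ] G
  green : ∀ φ ψ : S.adjoint.domain,
    (inner ℂ (φ : H) (S.adjoint ψ) : ℂ) - inner ℂ (S.adjoint φ) (ψ : H)
      = (inner ℂ (Γ₁ φ) (Γ₂ ψ) : ℂ) - inner ℂ (Γ₂ φ) (Γ₁ ψ)
  surj : Function.Surjective fun φ : S.adjoint.domain => (Γ₁ φ, Γ₂ φ)

/-- The restriction of a partially defined operator `T` to a submodule `K` of its domain. -/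
noncomputable def pmapRestrict (T : H →ₗ.[ℂ] H) (K : Submodule ℂ T.domain) : H →ₗ.[ℂ] H where
  domain := K.map T.domain.subtype
  toFun := (T.toFun.comp K.subtype).comp
    (Submodule.equivMapOfInjective T.domain.subtype
      (Submodule.injective_subtype T.domain) K).symm.toLinearMap

/-- The distinguished extension `H⁰`: the restriction of `S*` to `ker Γ₁`. -/
noncomputable def H0 (S : H →ₗ.[ℂ] H) (BT : BoundaryTriple S G) : H →ₗ.[ℂ] H :=
  pmapRestrict S.adjoint (LinearMap.ker BT.Γ₁)

/-- The extension `H^{A,B}`: the restriction of `S*` to `{φ : A Γ₁ φ = B Γ₂ φ}`. -/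
noncomputable def HAB (S : H →ₗ.[ℂ] H) (BT : BoundaryTriple S G) (A B : G →L[ℂ] G) :
    H →ₗ.[ℂ] H :=
  pmapRestrict S.adjoint
    (LinearMap.ker ((A.toLinearMap.comp BT.Γ₁) - (B.toLinearMap.comp BT.Γ₂)))

/-- `R` is the resolvent of `T` at `z`: a bounded, everywhere defined two-sided inverse
of `T - z`. -/
def IsResolventOf (T : H →ₗ.[ℂ] H) (z : ℂ) (R : H →L[ℂ] H) : Prop :=
  (∀ f : H, ∃ φ : T.domain, (φ : H) = R f ∧ T φ - z • (φ : H) = f) ∧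
  (∀ φ : T.domain, R (T φ - z • (φ : H)) = φ)

/-- `z` is in the resolvent set of `T`. -/
def InResolventSet (T : H →ₗ.[ℂ] H) (z : ℂ) : Prop := ∃ R, IsResolventOf T z R

/-- `γz` is the `Γ`-field at `z`: the inverse of `Γ₁` restricted to the deficiency
space `N_z = ker (S* - z)`. -/
def IsGammaField (S : H →ₗ.[ℂ] H) (BT : BoundaryTriple S G) (z : ℂ) (γz : G →L[ℂ] H) : Prop :=
  (∀ ξ : G, ∃ φ : S.adjoint.domain, (φ : H) = γz ξ ∧ S.adjoint φ = z • (φ : H) ∧ BT.Γ₁ φ = ξ) ∧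
  (∀ φ : S.adjoint.domain, S.adjoint φ = z • (φ : H) → γz (BT.Γ₁ φ) = (φ : H))

/-- `Qz` is the `Q`-function (Weyl function) at `z`: `Qz = Γ₂ ∘ γz`. -/
def IsQFunction (S : H →ₗ.[ℂ] H) (BT : BoundaryTriple S G) (z : ℂ)
    (γz : G →L[ℂ] H) (Qz : G →L[ℂ] G) : Prop :=
  IsGammaField S BT z γz ∧
    ∀ φ : S.adjoint.domain, S.adjoint φ = z • (φ : H) → Qz (BT.Γ₁ φ) = BT.Γ₂ φ


section AuxLemmas

variable (T : H →ₗ.[ℂ] H) (K : Submodule ℂ T.domain)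

lemma pmapRestrict_spec (φ : (pmapRestrict T K).domain) :
    ∃ k : T.domain, k ∈ K ∧ (k : H) = (φ : H) ∧ pmapRestrict T K φ = T k := by
  set e := Submodule.equivMapOfInjective T.domain.subtype
      (Submodule.injective_subtype T.domain) K with he
  refine ⟨(e.symm φ : K), (e.symm φ).2, ?_, ?_⟩
  · have h : ((e (e.symm φ)) : H) = (φ : H) := by rw [e.apply_symm_apply φ]
    rw [← h, Submodule.coe_equivMapOfInjective_apply]
    rfl
  · rfl

lemma pmapRestrict_mk (k : T.domain) (hk : k ∈ K) :
    ∃ φ : (pmapRestrict T K).domain, (φ : H) = (k : H) ∧ pmapRestrict T K φ = T k := by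
  set e := Submodule.equivMapOfInjective T.domain.subtype
      (Submodule.injective_subtype T.domain) K with he
  have hmem : (k : H) ∈ K.map T.domain.subtype := ⟨k, hk, rfl⟩
  refine ⟨⟨(k : H), hmem⟩, rfl, ?_⟩
  have hsymm : e.symm ⟨(k : H), hmem⟩ = ⟨k, hk⟩ := by
    rw [LinearEquiv.symm_apply_eq]
    apply Subtype.ext
    rw [he, Submodule.coe_equivMapOfInjective_apply]
    rfl
  show T.toFun (K.subtype (e.symm ⟨(k : H), hmem⟩)) = T k
  rw [hsymm]
  rfl

end AuxLemmas
set_option linter.unusedSectionVars false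

lemma gamma2_eq (S : H →ₗ.[ℂ] H) (BT : BoundaryTriple S G) (z : ℂ) (γz : G →L[ℂ] H)
    (hγ : IsGammaField S BT z γz) (φ : S.adjoint.domain) (hφ : BT.Γ₁ φ = 0) :
    BT.Γ₂ φ = adjoint γz (S.adjoint φ - (starRingEnd ℂ) z • (φ : H)) := by
  apply ext_inner_right ℂ
  intro η
  obtain ⟨ψ, hcoe, heig, hΓ⟩ := hγ.1 η
  have hg := BT.green φ ψ
  rw [hφ, hΓ, heig, hcoe] at hg
  rw [adjoint_inner_left, inner_sub_left, inner_smul_left, inner_smul_right] at *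
  simp only [inner_zero_left, RingHom.id_apply, starRingEnd_self_apply, zero_sub] at hg ⊢
  linear_combination hg

lemma isBoundedlyInvertible_of_bijective {E F : Type*} [NormedAddCommGroup E] [NormedSpace ℂ E]
    [CompleteSpace E] [NormedAddCommGroup F] [NormedSpace ℂ F] [CompleteSpace F]
    (T : E →L[ℂ] F) (h : Function.Bijective T) : IsBoundedlyInvertible T := by
  let e := ContinuousLinearEquiv.ofBijective T (LinearMap.ker_eq_bot.mpr h.1)
    (LinearMap.range_eq_top.mpr h.2)
  refine ⟨(e.symm : F →L[ℂ] E), fun x => ?_, fun y => ?_⟩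
  · show e.symm (T x) = x
    exact e.symm_apply_apply x
  · show T ((e.symm : F →L[ℂ] E) y) = y
    exact e.apply_symm_apply y
lemma mab_apply (A B : G →L[ℂ] G) (p : G × G) :
    MAB A B p = (A p.1 - B p.2, B p.1 + A p.2) := rfl

lemma normalized_pair_exists (A B : G →L[ℂ] G) (hAB : A ∘L adjoint B = B ∘L adjoint A)
    (hM : IsBoundedlyInvertible (MAB A B)) {u v : G} (huv : A u = B v) :
    ∃ x, u = adjoint B x ∧ v = adjoint A x := by
  obtain ⟨M', hl, hr⟩ := hM
  have hABp : ∀ x, A (adjoint B x) = B (adjoint A x) := by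
    intro x
    have h := ContinuousLinearMap.ext_iff.mp hAB x
    simpa using h
  have hMinj : Function.Injective (MAB A B) := by
    intro a b hab
    have h := congrArg M' hab
    rwa [hl, hl] at h
  let e : WithLp 2 (G × G) ≃L[ℂ] G × G := WithLp.prodContinuousLinearEquiv 2 ℂ G G
  let M₂ : WithLp 2 (G × G) →L[ℂ] WithLp 2 (G × G) :=
    (e.symm : (G × G) →L[ℂ] WithLp 2 (G × G)) ∘L (MAB A B) ∘L (e : WithLp 2 (G × G) →L[ℂ] G × G)
  let M₂' : WithLp 2 (G × G) →L[ℂ] WithLp 2 (G × G) :=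
    (e.symm : (G × G) →L[ℂ] WithLp 2 (G × G)) ∘L M' ∘L (e : WithLp 2 (G × G) →L[ℂ] G × G)
  have hcomp : M₂ ∘L M₂' = ContinuousLinearMap.id ℂ _ := by
    apply ContinuousLinearMap.ext
    intro y
    simp [M₂, M₂', hr]
  have hcomp' : M₂' ∘L M₂ = ContinuousLinearMap.id ℂ _ := by
    apply ContinuousLinearMap.ext
    intro y
    simp [M₂, M₂', hl]
  have hadj : (e.symm : (G × G) →L[ℂ] WithLp 2 (G × G)) ∘L (MAB (adjoint A) (-(adjoint B)))
      ∘L (e : WithLp 2 (G × G) →L[ℂ] G × G) = adjoint M₂ := by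
    rw [ContinuousLinearMap.eq_adjoint_iff]
    intro x y
    simp only [M₂, ContinuousLinearMap.comp_apply, ContinuousLinearEquiv.coe_coe,
      WithLp.prod_inner_apply, mab_apply]
    simp [e, WithLp.prodContinuousLinearEquiv_apply, WithLp.prodContinuousLinearEquiv_symm_apply,
      WithLp.ofLp_fst, WithLp.ofLp_snd, WithLp.toLp_fst, WithLp.toLp_snd,
      inner_add_left, inner_sub_left, inner_add_right, inner_sub_right,
      adjoint_inner_left, inner_neg_left]
    ring
  have hadj_surj : Function.Surjective (adjoint M₂) := by
    intro y
    refine ⟨adjoint M₂' y, ?_⟩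
    have h := congrArg ContinuousLinearMap.adjoint hcomp'
    rw [ContinuousLinearMap.adjoint_comp, ContinuousLinearMap.adjoint_id] at h
    exact ContinuousLinearMap.ext_iff.mp h y
  have hDsurj : ∀ c : G, ∃ x : G, B (adjoint B x) + A (adjoint A x) = c := by
    intro c
    have hM₂surj : Function.Surjective M₂ := fun y =>
      ⟨M₂' y, ContinuousLinearMap.ext_iff.mp hcomp y⟩
    obtain ⟨y, hy⟩ := hM₂surj (e.symm (0, c))
    obtain ⟨w, hw⟩ := hadj_surj y
    have h1 : M₂ (adjoint M₂ w) = e.symm (0, c) := by rw [hw, hy]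
    rw [← hadj] at h1
    have h2 : MAB A B (MAB (adjoint A) (-(adjoint B)) (e w)) = (0, c) := by
      have h3 := congrArg e h1
      simpa [M₂, e, WithLp.prodContinuousLinearEquiv_apply, WithLp.prodContinuousLinearEquiv_symm_apply] using h3
    refine ⟨(e w).2, ?_⟩
    have h3 := congrArg Prod.snd h2
    simp only [mab_apply, map_add, map_sub, map_neg,
      ContinuousLinearMap.neg_apply, hABp] at h3
    rw [← h3]
    abel
  obtain ⟨x, hx⟩ := hDsurj (B u + A v)
  have heq : MAB A B (adjoint B x, adjoint A x) = MAB A B (u, v) := by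
    rw [mab_apply, mab_apply]
    rw [hABp x, huv, hx]
    simp
  have h := hMinj heq
  exact ⟨x, (Prod.mk.injEq _ _ _ _).mp h |>.1.symm, (Prod.mk.injEq _ _ _ _).mp h |>.2.symm⟩
lemma hab_mem_iff (S : H →ₗ.[ℂ] H) (BT : BoundaryTriple S G) (A B : G →L[ℂ] G)
    (k : S.adjoint.domain) :
    k ∈ LinearMap.ker ((A.toLinearMap.comp BT.Γ₁) - (B.toLinearMap.comp BT.Γ₂)) ↔
      A (BT.Γ₁ k) = B (BT.Γ₂ k) := by
  rw [LinearMap.mem_ker, LinearMap.sub_apply, LinearMap.comp_apply, LinearMap.comp_apply,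
    sub_eq_zero]
  rfl

lemma resolvent_construct (S : H →ₗ.[ℂ] H) (BT : BoundaryTriple S G)
    (A B : G →L[ℂ] G) (z : ℂ) (γz : G →L[ℂ] H) (Qz : G →L[ℂ] G)
    (hQ : IsQFunction S BT z γz Qz)
    (R0 : H →L[ℂ] H)
    (hR0a : ∀ f : H, ∃ φ : S.adjoint.domain,
      BT.Γ₁ φ = 0 ∧ (φ : H) = R0 f ∧ S.adjoint φ - z • (φ : H) = f)
    (E : H →L[ℂ] G)
    (hE : ∀ (f : H) (φ : S.adjoint.domain), BT.Γ₁ φ = 0 → (φ : H) = R0 f →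
      S.adjoint φ - z • (φ : H) = f → BT.Γ₂ φ = E f)
    (C : H →L[ℂ] G)
    (hC1 : ∀ f, B (Qz (C f)) - A (C f) = B (E f))
    (hC2 : ∀ (u v : G) (f : H), A u = B v → E f = v - Qz u → C f = -u) :
    InResolventSet (HAB S BT A B) z := by
  refine ⟨R0 - γz ∘L C, ?_, ?_⟩
  · intro f
    obtain ⟨ψ, hψ1, hψ2, hψ3⟩ := hR0a f
    obtain ⟨χ, hχ1, hχ2, hχ3⟩ := hQ.1.1 (C f)
    have hΓ₂χ : BT.Γ₂ χ = Qz (C f) := by rw [← hχ3]; exact (hQ.2 χ hχ2).symm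
    have hΓ₂ψ : BT.Γ₂ ψ = E f := hE f ψ hψ1 hψ2 hψ3
    have hbc : (ψ - χ) ∈ LinearMap.ker ((A.toLinearMap.comp BT.Γ₁) -
        (B.toLinearMap.comp BT.Γ₂)) := by
      rw [hab_mem_iff]
      simp only [map_sub, map_zero, hψ1, hχ3, hΓ₂χ, hΓ₂ψ, zero_sub, map_neg]
      rw [← hC1 f]
      abel
    obtain ⟨φ', hφ'1, hφ'2⟩ := pmapRestrict_mk S.adjoint _ (ψ - χ) hbc
    have hφ'2' : HAB S BT A B φ' = S.adjoint (ψ - χ) := hφ'2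
    refine ⟨φ', ?_, ?_⟩
    · rw [hφ'1]
      push_cast
      rw [hψ2, hχ1]
      simp
    · show HAB S BT A B φ' - z • (φ' : H) = f
      rw [hφ'2', hφ'1, LinearPMap.map_sub, hχ2]
      push_cast
      rw [smul_sub]
      rw [← hψ3]
      abel
  · intro φ'
    obtain ⟨k, hkmem, hkcoe, hkval⟩ := pmapRestrict_spec S.adjoint _ φ'
    have hkval' : HAB S BT A B φ' = S.adjoint k := hkval
    have hbc : A (BT.Γ₁ k) = B (BT.Γ₂ k) := (hab_mem_iff S BT A B k).mp hkmem
    set g := S.adjoint k - z • (k : H) with hgdef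
    obtain ⟨ψ, hψ1, hψ2, hψ3⟩ := hR0a g
    have hχeig : S.adjoint (k - ψ) = z • ((k - ψ : S.adjoint.domain) : H) := by
      rw [LinearPMap.map_sub]
      push_cast
      rw [smul_sub]
      have h1 : S.adjoint k = g + z • (k : H) := by rw [hgdef]; abel
      have h2 : S.adjoint ψ = g + z • (ψ : H) := by rw [← hψ3]; abel
      rw [h1, h2]
      abel
    have hγχ : γz (BT.Γ₁ (k - ψ)) = ((k - ψ : S.adjoint.domain) : H) := hQ.1.2 _ hχeig
    have hQχ : Qz (BT.Γ₁ (k - ψ)) = BT.Γ₂ (k - ψ) := hQ.2 _ hχeig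
    have hΓ₁χ : BT.Γ₁ (k - ψ) = BT.Γ₁ k := by rw [map_sub, hψ1, sub_zero]
    have hEg : E g = BT.Γ₂ k - Qz (BT.Γ₁ k) := by
      rw [← hE g ψ hψ1 hψ2 hψ3, ← hΓ₁χ, hQχ, map_sub]
      abel
    have hCg : C g = -(BT.Γ₁ k) := hC2 (BT.Γ₁ k) (BT.Γ₂ k) g hbc hEg
    show (R0 - γz ∘L C) (HAB S BT A B φ' - z • (φ' : H)) = (φ' : H)
    rw [hkval', ← hkcoe, ← hgdef]
    simp only [ContinuousLinearMap.sub_apply, ContinuousLinearMap.comp_apply]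
    rw [hCg, map_neg, sub_neg_eq_add, ← hψ2, ← hΓ₁χ, hγχ]
    push_cast
    abel
lemma nz_zero (S : H →ₗ.[ℂ] H) (BT : BoundaryTriple S G) (A B : G →L[ℂ] G) (z : ℂ)
    (R : H →L[ℂ] H) (hR : IsResolventOf (HAB S BT A B) z R)
    (χ : S.adjoint.domain) (hχeig : S.adjoint χ = z • (χ : H))
    (hχbc : A (BT.Γ₁ χ) = B (BT.Γ₂ χ)) : χ = 0 := by
  obtain ⟨φ', hφ'1, hφ'2⟩ := pmapRestrict_mk S.adjoint _ χ
    ((hab_mem_iff S BT A B χ).mpr hχbc)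
  have hφ'2' : HAB S BT A B φ' = S.adjoint χ := hφ'2
  have h0 := hR.2 φ'
  rw [hφ'2', hφ'1, hχeig, sub_self, map_zero] at h0
  exact Subtype.ext h0.symm

lemma bij_of_resolvent₁ (S : H →ₗ.[ℂ] H) (BT : BoundaryTriple S G) (A B : G →L[ℂ] G)
    (hM : IsBoundedlyInvertible (MAB A B))
    (z : ℂ) (γz : G →L[ℂ] H) (Qz : G →L[ℂ] G) (hQ : IsQFunction S BT z γz Qz)
    (R : H →L[ℂ] H) (hR : IsResolventOf (HAB S BT A B) z R) :
    Function.Bijective (B ∘L Qz - A) := by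
  obtain ⟨M', hl, hr⟩ := hM
  constructor
  · rw [injective_iff_map_eq_zero]
    intro ξ hξ
    simp only [ContinuousLinearMap.sub_apply, ContinuousLinearMap.comp_apply] at hξ
    obtain ⟨χ, hχ1, hχ2, hχ3⟩ := hQ.1.1 ξ
    have hΓ₂χ : BT.Γ₂ χ = Qz ξ := by rw [← hχ3]; exact (hQ.2 χ hχ2).symm
    have hbc : A (BT.Γ₁ χ) = B (BT.Γ₂ χ) := by
      rw [hχ3, hΓ₂χ, ← sub_eq_zero, ← neg_sub, hξ, neg_zero]
    have hχ0 := nz_zero S BT A B z R hR χ hχ2 hbc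
    rw [← hχ3, hχ0, map_zero]
  · intro η
    set p := M' (-η, 0) with hp
    have hMp : MAB A B p = (-η, 0) := hr _
    have hp1 : A p.1 - B p.2 = -η := congrArg Prod.fst hMp
    obtain ⟨φ₀, hφ₀⟩ := BT.surj (p.1, p.2)
    have hΓ₁φ₀ : BT.Γ₁ φ₀ = p.1 := congrArg Prod.fst hφ₀
    have hΓ₂φ₀ : BT.Γ₂ φ₀ = p.2 := congrArg Prod.snd hφ₀
    set g := S.adjoint φ₀ - z • (φ₀ : H) with hgdef
    obtain ⟨φ', hφ'c, hφ'v⟩ := hR.1 g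
    obtain ⟨k, hkmem, hkcoe, hkval⟩ := pmapRestrict_spec S.adjoint _ φ'
    have hkval' : HAB S BT A B φ' = S.adjoint k := hkval
    have hbck : A (BT.Γ₁ k) = B (BT.Γ₂ k) := (hab_mem_iff S BT A B k).mp hkmem
    have hkres : S.adjoint k - z • (k : H) = g := by
      rw [hkcoe, ← hkval', hφ'v]
    have hχeig : S.adjoint (φ₀ - k) = z • ((φ₀ - k : S.adjoint.domain) : H) := by
      rw [LinearPMap.map_sub]
      push_cast
      rw [smul_sub]
      have h1 : S.adjoint φ₀ = g + z • (φ₀ : H) := by rw [hgdef]; abel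
      have h2 : S.adjoint k = g + z • (k : H) := by rw [← hkres]; abel
      rw [h1, h2]
      abel
    have hQχ : Qz (BT.Γ₁ (φ₀ - k)) = BT.Γ₂ (φ₀ - k) := hQ.2 _ hχeig
    refine ⟨BT.Γ₁ (φ₀ - k), ?_⟩
    simp only [ContinuousLinearMap.sub_apply, ContinuousLinearMap.comp_apply]
    rw [hQχ, map_sub, map_sub, map_sub, map_sub, hbck, hΓ₁φ₀, hΓ₂φ₀]
    rw [sub_sub_sub_cancel_right, ← neg_sub (A p.1), hp1, neg_neg]

lemma bij_of_resolvent₂ (S : H →ₗ.[ℂ] H) (BT : BoundaryTriple S G) (A B : G →L[ℂ] G)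
    (hAB : A ∘L adjoint B = B ∘L adjoint A) (hM : IsBoundedlyInvertible (MAB A B))
    (z : ℂ) (γz : G →L[ℂ] H) (Qz : G →L[ℂ] G) (hQ : IsQFunction S BT z γz Qz)
    (R : H →L[ℂ] H) (hR : IsResolventOf (HAB S BT A B) z R) :
    Function.Bijective (Qz ∘L adjoint B - adjoint A) := by
  have hABp : ∀ x, A (adjoint B x) = B (adjoint A x) := by
    intro x
    have h := ContinuousLinearMap.ext_iff.mp hAB x
    simpa using h
  obtain ⟨M', hl, hr⟩ := hM
  constructor
  · rw [injective_iff_map_eq_zero]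
    intro x hx
    simp only [ContinuousLinearMap.sub_apply, ContinuousLinearMap.comp_apply] at hx
    rw [sub_eq_zero] at hx
    obtain ⟨χ, hχ1, hχ2, hχ3⟩ := hQ.1.1 (adjoint B x)
    have hΓ₂χ : BT.Γ₂ χ = Qz (adjoint B x) := by rw [← hχ3]; exact (hQ.2 χ hχ2).symm
    have hbc : A (BT.Γ₁ χ) = B (BT.Γ₂ χ) := by rw [hχ3, hΓ₂χ, hx]; exact hABp x
    have hχ0 := nz_zero S BT A B z R hR χ hχ2 hbc
    have hBx : adjoint B x = 0 := by rw [← hχ3, hχ0, map_zero]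
    have hAx : adjoint A x = 0 := by rw [← hx, hBx, map_zero]
    -- conclude x = 0 via surjectivity of MAB
    set q := M' (x, 0) with hq
    have hMq : MAB A B q = (x, 0) := hr _
    have hq1 : A q.1 - B q.2 = x := congrArg Prod.fst hMq
    have hxx : (inner ℂ x x : ℂ) = 0 := by
      have h2 : (inner ℂ ((adjoint A) x) q.1 : ℂ) - inner ℂ ((adjoint B) x) q.2 = inner ℂ x x := by
        rw [adjoint_inner_left, adjoint_inner_left, ← inner_sub_right, hq1]
      rw [hAx, hBx, inner_zero_left, inner_zero_left, sub_zero] at h2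
      exact h2.symm
    exact inner_self_eq_zero.mp hxx
  · intro η
    obtain ⟨φ₀, hφ₀⟩ := BT.surj (0, -η)
    have hΓ₁φ₀ : BT.Γ₁ φ₀ = 0 := congrArg Prod.fst hφ₀
    have hΓ₂φ₀ : BT.Γ₂ φ₀ = -η := congrArg Prod.snd hφ₀
    set g := S.adjoint φ₀ - z • (φ₀ : H) with hgdef
    obtain ⟨φ', hφ'c, hφ'v⟩ := hR.1 g
    obtain ⟨k, hkmem, hkcoe, hkval⟩ := pmapRestrict_spec S.adjoint _ φ'
    have hkval' : HAB S BT A B φ' = S.adjoint k := hkval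
    have hbck : A (BT.Γ₁ k) = B (BT.Γ₂ k) := (hab_mem_iff S BT A B k).mp hkmem
    obtain ⟨x, hx1, hx2⟩ := normalized_pair_exists A B hAB ⟨M', hl, hr⟩ hbck
    have hkres : S.adjoint k - z • (k : H) = g := by
      rw [hkcoe, ← hkval', hφ'v]
    have hχeig : S.adjoint (φ₀ - k) = z • ((φ₀ - k : S.adjoint.domain) : H) := by
      rw [LinearPMap.map_sub]
      push_cast
      rw [smul_sub]
      have h1 : S.adjoint φ₀ = g + z • (φ₀ : H) := by rw [hgdef]; abel
      have h2 : S.adjoint k = g + z • (k : H) := by rw [← hkres]; abel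
      rw [h1, h2]
      abel
    have hQχ : Qz (BT.Γ₁ (φ₀ - k)) = BT.Γ₂ (φ₀ - k) := hQ.2 _ hχeig
    simp only [map_sub, hΓ₁φ₀, hΓ₂φ₀, hx1, hx2, zero_sub, map_neg] at hQχ
    refine ⟨x, ?_⟩
    simp only [ContinuousLinearMap.sub_apply, ContinuousLinearMap.comp_apply]
    -- hQχ : -Qz (adjoint B x) = -η - adjoint A x
    have := congrArg Neg.neg hQχ
    rw [neg_neg, neg_sub] at this
    rw [this]
    abel

/-- For a normalized pair `(A,B)` and `z` in the resolvent set of `H⁰`: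
`z` belongs to the spectrum of `H^{A,B}` iff `0` belongs to the spectrum of `BQ(z) − A`,
iff `0` belongs to the spectrum of `Q(z)B* − A*`. -/
theorem spectrum_HAB_iff (S : H →ₗ.[ℂ] H)
    (hdense : Dense (S.domain : Set H)) (hclosed : S.IsClosed) (hsymm : IsSymmetricPMap S)
    (BT : BoundaryTriple S G) (A B : G →L[ℂ] G)
    (hAB : A ∘L adjoint B = B ∘L adjoint A) (hM : IsBoundedlyInvertible (MAB A B)) :
    ∀ z : ℂ, InResolventSet (H0 S BT) z →
      ∀ (γz : G →L[ℂ] H) (Qz : G →L[ℂ] G), IsQFunction S BT z γz Qz →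
        ((¬ InResolventSet (HAB S BT A B) z ↔ ¬ IsBoundedlyInvertible (B ∘L Qz - A)) ∧
         (¬ InResolventSet (HAB S BT A B) z ↔
            ¬ IsBoundedlyInvertible (Qz ∘L adjoint B - adjoint A))) := by
  intro z hz γz Qz hQ
  obtain ⟨R0, hR0fst, hR0snd⟩ := hz
  have hABp : ∀ x, A (adjoint B x) = B (adjoint A x) := by
    intro x
    have h := ContinuousLinearMap.ext_iff.mp hAB x
    simpa using h
  have hR0a : ∀ f : H, ∃ φ : S.adjoint.domain,
      BT.Γ₁ φ = 0 ∧ (φ : H) = R0 f ∧ S.adjoint φ - z • (φ : H) = f := by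
    intro f
    obtain ⟨φ0, h1, h2⟩ := hR0fst f
    obtain ⟨k, hk, hkc, hkv⟩ := pmapRestrict_spec S.adjoint _ φ0
    have hkv' : H0 S BT φ0 = S.adjoint k := hkv
    refine ⟨k, LinearMap.mem_ker.mp hk, by rw [hkc, h1], ?_⟩
    rw [← hkv', hkc]
    exact h2
  set Ez : H →L[ℂ] G := adjoint γz ∘L
    (ContinuousLinearMap.id ℂ H + (z - (starRingEnd ℂ) z) • R0) with hEzdef
  have hE : ∀ (f : H) (φ : S.adjoint.domain), BT.Γ₁ φ = 0 → (φ : H) = R0 f →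
      S.adjoint φ - z • (φ : H) = f → BT.Γ₂ φ = Ez f := by
    intro f φ h1 h2 h3
    rw [gamma2_eq S BT z γz hQ.1 φ h1, hEzdef]
    simp only [ContinuousLinearMap.comp_apply, ContinuousLinearMap.add_apply,
      ContinuousLinearMap.id_apply, ContinuousLinearMap.smul_apply]
    congr 1
    rw [← h2, ← h3]
    module
  have key1 : InResolventSet (HAB S BT A B) z ↔ IsBoundedlyInvertible (B ∘L Qz - A) := by
    constructor
    · rintro ⟨R, hR⟩
      exact isBoundedlyInvertible_of_bijective _ (bij_of_resolvent₁ S BT A B hM z γz Qz hQ R hR)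
    · rintro ⟨T, hT1, hT2⟩
      apply resolvent_construct S BT A B z γz Qz hQ R0 hR0a Ez hE (T ∘L B ∘L Ez)
      · intro f
        have h := hT2 (B (Ez f))
        simp only [ContinuousLinearMap.sub_apply, ContinuousLinearMap.comp_apply] at h ⊢
        exact h
      · intro u v f hA hEf
        simp only [ContinuousLinearMap.comp_apply]
        have h : B (Ez f) = -((B ∘L Qz - A) u) := by
          simp only [ContinuousLinearMap.sub_apply, ContinuousLinearMap.comp_apply]
          rw [hEf, map_sub, hA, neg_sub]
        rw [h, map_neg, hT1]
  have key2 : InResolventSet (HAB S BT A B) z ↔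
      IsBoundedlyInvertible (Qz ∘L adjoint B - adjoint A) := by
    constructor
    · rintro ⟨R, hR⟩
      exact isBoundedlyInvertible_of_bijective _
        (bij_of_resolvent₂ S BT A B hAB hM z γz Qz hQ R hR)
    · rintro ⟨T, hT1, hT2⟩
      apply resolvent_construct S BT A B z γz Qz hQ R0 hR0a Ez hE (adjoint B ∘L T ∘L Ez)
      · intro f
        have h := hT2 (Ez f)
        simp only [ContinuousLinearMap.sub_apply, ContinuousLinearMap.comp_apply] at h ⊢
        rw [hABp, ← map_sub, h]
      · intro u v f hA hEf
        obtain ⟨x₀, hx1, hx2⟩ := normalized_pair_exists A B hAB hM hA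
        have h1 : Ez f = -((Qz ∘L adjoint B - adjoint A) x₀) := by
          simp only [ContinuousLinearMap.sub_apply, ContinuousLinearMap.comp_apply]
          rw [hEf, hx1, hx2, neg_sub]
        simp only [ContinuousLinearMap.comp_apply]
        rw [h1, map_neg, hT1, map_neg, hx1]
  exact ⟨not_congr key1, not_congr key2⟩
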